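/- Let F = ℚ(t_1,...,t_n) and let γ ∈ M_n(F) satisfy γw = w for w = (1−t_1,...,1−t_n)^T (with each 1 − t_i ≠ 0) and uγ = u for u = (t_1^{-1},...,(t_1⋯t_n)^{-1}). Let γ̃ be the induced map on F^n/Fw. Then det((I−γ)(1,1))/(1−t_1) · ((t_1⋯t_n)^{-1} − 1) = ± t_1^{-1} det(I − γ̃); i.e. the Alexander function Δ = t_1 det((I−γ)(1,1))/(1−t_1) satisfies Δ = ± det(I − γ̃)/((t_1⋯t_n)^{-1} − 1). -/

import Mathlib

open Matrix Finset

-- rank-one determinant lemma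
lemma aux_col_neg {F : Type*} [Field F] {m : ℕ} (x : Fin m → F) :
    Matrix.replicateCol (Fin 1) (-x) = -Matrix.replicateCol (Fin 1) x := by
  ext i j; simp [Matrix.replicateCol]

lemma aux_det_rankone {F : Type*} [Field F] {m : ℕ}
    (N : Matrix (Fin m) (Fin m) F) (w' u' c : Fin m → F) (s : F) (hs : s ≠ 0)
    (hc : Matrix.vecMul u' N = s • c) :
    (N - Matrix.replicateCol (Fin 1) w' * Matrix.replicateRow (Fin 1) c).det
      = (1 - s⁻¹ * (u' ⬝ᵥ w')) * N.det := by
  have h1 : Matrix.replicateCol (Fin 1) w' * Matrix.replicateRow (Fin 1) c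
      = (Matrix.replicateCol (Fin 1) (s⁻¹ • w') * Matrix.replicateRow (Fin 1) u') * N := by
    rw [Matrix.mul_assoc, ← Matrix.replicateRow_vecMul, hc, Matrix.replicateRow_smul, Matrix.replicateCol_smul,
      Matrix.mul_smul, Matrix.smul_mul, smul_smul, mul_inv_cancel₀ hs, one_smul]
  have h2 : N - Matrix.replicateCol (Fin 1) w' * Matrix.replicateRow (Fin 1) c
      = (1 - Matrix.replicateCol (Fin 1) (s⁻¹ • w') * Matrix.replicateRow (Fin 1) u') * N := by
    rw [h1, Matrix.sub_mul, Matrix.one_mul]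
  rw [h2, Matrix.det_mul]
  congr 1
  rw [sub_eq_add_neg, ← Matrix.neg_mul, ← aux_col_neg]
  refine (Matrix.det_one_add_replicateCol_mul_replicateRow (ι := Fin 1) _ _).trans ?_
  simp [dotProduct_neg, dotProduct_smul, smul_eq_mul]
  ring

lemma aux_telescope {F : Type*} [Field F] {n : ℕ} (t : Fin (n + 1) → F)
    (ht : ∀ i, t i ≠ 0) :
    ∑ i : Fin (n + 1), (∏ j ∈ Finset.Iic i, t j)⁻¹ * (1 - t i)
      = (∏ i, t i)⁻¹ - 1 := by
  set f : ℕ → F := fun k => (∏ j ∈ Finset.univ.filter (fun j : Fin (n+1) => (j : ℕ) < k), t j)⁻¹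
    with hf
  have hstep : ∀ i : Fin (n + 1),
      (∏ j ∈ Finset.Iic i, t j)⁻¹ * (1 - t i) = f ((i : ℕ) + 1) - f (i : ℕ) := by
    intro i
    have h1 : Finset.univ.filter (fun j : Fin (n+1) => (j : ℕ) < (i : ℕ) + 1)
        = Finset.Iic i := by
      ext j
      simp only [Finset.mem_filter, Finset.mem_univ, true_and, Finset.mem_Iic]
      rw [Fin.le_def]
      omega
    have h2 : Finset.Iic i
        = insert i (Finset.univ.filter (fun j : Fin (n+1) => (j : ℕ) < (i : ℕ))) := by
      ext j
      simp only [Finset.mem_Iic, Finset.mem_insert, Finset.mem_filter, Finset.mem_univ, true_and]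
      constructor
      · intro h
        rcases eq_or_lt_of_le h with h' | h'
        · exact Or.inl h'
        · exact Or.inr h'
      · rintro (rfl | h)
        · exact le_rfl
        · exact le_of_lt h
    have hnotmem : i ∉ Finset.univ.filter (fun j : Fin (n+1) => (j : ℕ) < (i : ℕ)) := by
      simp
    have h3 : ∏ j ∈ Finset.Iic i, t j
        = t i * ∏ j ∈ Finset.univ.filter (fun j : Fin (n+1) => (j : ℕ) < (i : ℕ)), t j := by
      rw [h2, Finset.prod_insert hnotmem]
    rw [hf]
    simp only
    rw [h1, h3]
    have ha : (∏ j ∈ Finset.univ.filter (fun j : Fin (n+1) => (j : ℕ) < (i : ℕ)), t j) ≠ 0 :=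
      Finset.prod_ne_zero_iff.2 fun j _ => ht j
    rw [_root_.mul_inv_rev, mul_sub, mul_one, mul_assoc, inv_mul_cancel₀ (ht i), mul_one]
  calc ∑ i : Fin (n + 1), (∏ j ∈ Finset.Iic i, t j)⁻¹ * (1 - t i)
      = ∑ i : Fin (n + 1), (f ((i : ℕ) + 1) - f (i : ℕ)) := by
        exact Finset.sum_congr rfl fun i _ => hstep i
    _ = ∑ k ∈ Finset.range (n + 1), (f (k + 1) - f k) :=
        Fin.sum_univ_eq_sum_range (fun k => f (k + 1) - f k) (n + 1)
    _ = f (n + 1) - f 0 := Finset.sum_range_sub f (n + 1)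
    _ = (∏ i, t i)⁻¹ - 1 := by
        rw [hf]
        simp only
        rw [show Finset.univ.filter (fun j : Fin (n+1) => (j : ℕ) < n + 1) = Finset.univ
          from Finset.filter_true_of_mem fun j _ => j.isLt]
        simp

set_option maxHeartbeats 1000000 in
/-- Over F = ℚ(t_1,…,t_{n+1}), let γ satisfy γw = w and uγ = u with
w_i = 1 − t_i and u_i = (t_1⋯t_i)^{-1}, and let γ̃ be the matrix of the induced map on
F^{n+1}/(F·w) in the basis of images of e_2,…,e_{n+1}.  Then
det((I−γ)(1,1))/(1−t_1) · ((t_1⋯t_{n+1})^{-1} − 1) = ± t_1^{-1} det(I − γ̃). -/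
theorem stmt19 {n : ℕ}
    (γ : Matrix (Fin (n + 1)) (Fin (n + 1)) (FractionRing (MvPolynomial (Fin (n + 1)) ℚ)))
    (γt : Matrix (Fin n) (Fin n) (FractionRing (MvPolynomial (Fin (n + 1)) ℚ))) :
    let F := FractionRing (MvPolynomial (Fin (n + 1)) ℚ)
    let t : Fin (n + 1) → F := fun i =>
      algebraMap (MvPolynomial (Fin (n + 1)) ℚ) F (MvPolynomial.X i)
    let w : Fin (n + 1) → F := fun i => 1 - t i
    let u : Fin (n + 1) → F := fun i => (∏ j ∈ Finset.Iic i, t j)⁻¹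
    γ.mulVec w = w → Matrix.vecMul u γ = u →
    (∀ j : Fin n, ∃ c : F, ∀ i : Fin (n + 1),
      γ i j.succ = c * w i + ∑ k : Fin n, γt k j * (if i = k.succ then (1 : F) else 0)) →
    (((1 - γ).submatrix Fin.succ Fin.succ).det / (1 - t 0) * ((∏ i, t i)⁻¹ - 1)
        = (t 0)⁻¹ * (1 - γt).det ∨
      ((1 - γ).submatrix Fin.succ Fin.succ).det / (1 - t 0) * ((∏ i, t i)⁻¹ - 1)
        = -((t 0)⁻¹ * (1 - γt).det)) := by
  intro F t w u hγw hγu hc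
  left
  choose c hcspec using hc
  have hinj : Function.Injective
      (algebraMap (MvPolynomial (Fin (n + 1)) ℚ) F) :=
    IsFractionRing.injective _ _
  have ht0 : ∀ i, t i ≠ 0 := by
    intro i h
    exact MvPolynomial.X_ne_zero i ((map_eq_zero_iff _ hinj).1 h)
  have ht1 : t 0 ≠ 1 := by
    intro h
    have hX : MvPolynomial.X (0 : Fin (n + 1)) = (1 : MvPolynomial (Fin (n + 1)) ℚ) :=
      hinj (h.trans (_root_.map_one _).symm)
    have := congrArg (MvPolynomial.eval fun _ => (0 : ℚ)) hX
    simp at this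
  have hP : (∏ i, t i) ≠ 1 := by
    intro h
    have hmap : (∏ i, t i)
        = algebraMap (MvPolynomial (Fin (n + 1)) ℚ) F (∏ i, MvPolynomial.X i) := by
      rw [map_prod]
    have hX : (∏ i, MvPolynomial.X i) = (1 : MvPolynomial (Fin (n + 1)) ℚ) :=
      hinj ((hmap.symm.trans h).trans (_root_.map_one _).symm)
    have := congrArg (MvPolynomial.eval fun _ => (0 : ℚ)) hX
    simp [MvPolynomial.eval_prod, Finset.prod_const, zero_pow] at this
  set s : F := (∏ i, t i)⁻¹ - 1 with hsdef
  have hs : s ≠ 0 := sub_ne_zero.2 fun h => hP (inv_eq_one.1 h)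
  have h1t0 : 1 - t 0 ≠ 0 := sub_ne_zero.2 fun h => ht1 h.symm
  set N : Matrix (Fin n) (Fin n) F := 1 - γt with hNdef
  set u' : Fin n → F := fun k => u k.succ with hu'def
  set w' : Fin n → F := fun k => w k.succ with hw'def
  -- dot product u ⬝ᵥ w = s
  have hdot : u ⬝ᵥ w = s := by
    show ∑ i, u i * w i = s
    exact aux_telescope t ht0
  -- u' ⬝ᵥ w'
  have hu0 : u 0 = (t 0)⁻¹ := by
    show (∏ j ∈ Finset.Iic (0 : Fin (n + 1)), t j)⁻¹ = (t 0)⁻¹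
    have : Finset.Iic (0 : Fin (n + 1)) = {0} := by
      ext j; simp [Fin.le_zero_iff]
    rw [this, Finset.prod_singleton]
  have hu'w' : u' ⬝ᵥ w' = s - ((t 0)⁻¹ - 1) := by
    have hsplit : u ⬝ᵥ w = u 0 * w 0 + ∑ k : Fin n, u' k * w' k :=
      Fin.sum_univ_succ fun i => u i * w i
    have hu0w0 : u 0 * w 0 = (t 0)⁻¹ - 1 := by
      show u 0 * (1 - t 0) = (t 0)⁻¹ - 1
      rw [hu0, mul_sub, mul_one, inv_mul_cancel₀ (ht0 0)]
    show ∑ k : Fin n, u' k * w' k = s - ((t 0)⁻¹ - 1)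
    rw [← hdot, hsplit, hu0w0]
    ring
  -- u' N = s • c
  have hu'N : Matrix.vecMul u' N = s • c := by
    funext j
    have h := congrFun hγu j.succ
    have h2 : ∑ i, u i * γ i j.succ = u j.succ := h
    have h3 : ∑ i, u i * γ i j.succ
        = c j * (u ⬝ᵥ w) + ∑ k : Fin n, u k.succ * γt k j := by
      calc ∑ i, u i * γ i j.succ
          = ∑ i, (u i * (c j * w i)
              + ∑ k : Fin n, u i * (γt k j * (if i = k.succ then (1 : F) else 0))) := by
            refine Finset.sum_congr rfl fun i _ => ?_
            rw [hcspec j i, mul_add, Finset.mul_sum]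
        _ = (∑ i, u i * (c j * w i))
              + ∑ i, ∑ k : Fin n, u i * (γt k j * (if i = k.succ then (1 : F) else 0)) :=
            Finset.sum_add_distrib
        _ = c j * (u ⬝ᵥ w) + ∑ k : Fin n, u k.succ * γt k j := by
            congr 1
            · show _ = c j * ∑ i, u i * w i
              rw [Finset.mul_sum]
              exact Finset.sum_congr rfl fun i _ => by ring
            · rw [Finset.sum_comm]
              refine Finset.sum_congr rfl fun k _ => ?_
              simp [mul_ite, Finset.sum_ite_eq', mul_comm]
    have h4 : ∑ k : Fin n, u k.succ * γt k j = u j.succ - s * c j := by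
      have := h3.symm.trans h2
      rw [hdot] at this
      linear_combination this
    show ∑ k : Fin n, u' k * N k j = s * c j
    have h5 : ∀ k : Fin n, u' k * N k j
        = u' k * (if k = j then (1 : F) else 0) - u' k * γt k j := by
      intro k
      rw [hNdef]
      simp only [Matrix.sub_apply, Matrix.one_apply]
      rw [mul_sub]
    rw [Finset.sum_congr rfl fun k _ => h5 k, Finset.sum_sub_distrib]
    simp only [mul_ite, mul_one, mul_zero, Finset.sum_ite_eq', Finset.mem_univ, if_true]
    rw [show ∑ k : Fin n, u' k * γt k j = ∑ k : Fin n, u k.succ * γt k j from rfl, h4]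
    show u j.succ - (u j.succ - s * c j) = s * c j
    ring
  -- the submatrix
  have hA : (1 - γ).submatrix Fin.succ Fin.succ
      = N - Matrix.replicateCol (Fin 1) w' * Matrix.replicateRow (Fin 1) c := by
    ext i j
    have hγe : γ i.succ j.succ = c j * w i.succ + γt i j := by
      rw [hcspec j i.succ]
      congr 1
      simp [Fin.succ_inj, mul_ite, Finset.sum_ite_eq]
    simp only [Matrix.submatrix_apply, Matrix.sub_apply, Matrix.one_apply, Matrix.mul_apply,
      Matrix.replicateCol, Matrix.replicateRow, Fin.sum_univ_one, hNdef, Matrix.of_apply]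
    rw [hγe]
    simp [Fin.succ_inj]
    ring
  rw [hA, aux_det_rankone N w' u' c s hs hu'N, hu'w']
  rw [hNdef]
  have e1 : 1 - s⁻¹ * (s - ((t 0)⁻¹ - 1)) = s⁻¹ * ((t 0)⁻¹ - 1) := by
    rw [mul_sub, inv_mul_cancel₀ hs]
    ring
  have e2 : ((t 0)⁻¹ - 1: F) = (t 0)⁻¹ * (1 - t 0) := by
    rw [mul_sub, mul_one, inv_mul_cancel₀ (ht0 0)]
  rw [e1, e2, div_mul_eq_mul_div, div_eq_iff h1t0]
  have e3 : s⁻¹ * ((t 0)⁻¹ * (1 - t 0)) * (1 - γt).det * s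
      = (s⁻¹ * s) * ((t 0)⁻¹ * (1 - γt).det * (1 - t 0)) := by ring
  rw [e3, inv_mul_cancel₀ hs, one_mul]
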